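/- Counterexample to adequacy of time-abstract bisimulation for games: consider the state space ℝ≥0 × {0,1} with dynamics γ(x₁, x₂, t) = (x₁ + t, x₂), and the partition into A = [0,1) × {0,1}, and for x₂ = 0: B-pieces ⋃_{k≥1} [2k, 2k+1) × {0} and C-pieces ⋃_{k≥0} [2k+1, 2k+2) × {0}, while for x₂ = 1 the roles of B and C are swapped. Then the equivalence relation identifying points in the same piece (A, B, or C) is a time-abstract bisimulation for the flow: if y ∼ y' and y can reach piece P after some delay, then y' can reach piece P after some (possibly different) delay. -/
import Mathlib


/-- The piece of point `(x₁, x₂)` (with `x₂ ∈ {0,1}`): `0` (= A) if `x₁ < 1`;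
`1` (= B) if `x₁ ≥ 1` and `⌊x₁⌋ + x₂` is even; `2` (= C) otherwise. -/
noncomputable def piece (x₁ : ℝ) (x₂ : ℤ) : ℕ :=
  if x₁ < 1 then 0 else if Even (⌊x₁⌋ + x₂) then 1 else 2

lemma piece_int (n c : ℤ) (hn : 1 ≤ n) :
    piece (n : ℝ) c = if Even (n + c) then 1 else 2 := by
  unfold piece
  rw [if_neg (by exact_mod_cast not_lt.2 hn), Int.floor_intCast]

lemma reach (y : ℝ) (c : ℤ) (e : Bool) :
    ∃ τ : ℝ, 0 ≤ τ ∧ piece (y + τ) c = if e then 1 else 2 := by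
  have key : ∃ n : ℤ, 1 ≤ n ∧ ⌈y⌉ ≤ n ∧ ((n + c) % 2 = if e then 0 else 1) := by
    set m : ℤ := max ⌈y⌉ 1 with hm
    have hm1 : 1 ≤ m := le_max_right _ _
    have hm2 : ⌈y⌉ ≤ m := le_max_left _ _
    by_cases h : (m + c) % 2 = 0 <;> cases e
    · exact ⟨m + 1, by omega, by omega, by split <;> simp_all <;> omega⟩
    · exact ⟨m, hm1, hm2, by split <;> simp_all <;> omega⟩
    · exact ⟨m, hm1, hm2, by split <;> simp_all <;> omega⟩
    · exact ⟨m + 1, by omega, by omega, by split <;> simp_all <;> omega⟩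
  obtain ⟨n, hn1, hn2, hn3⟩ := key
  have hyn : y ≤ (n : ℝ) := le_trans (Int.le_ceil y) (by exact_mod_cast hn2)
  refine ⟨(n : ℝ) - y, by linarith, ?_⟩
  rw [show y + ((n:ℝ) - y) = (n:ℝ) by ring, piece_int n c hn1]
  cases e
  · rw [if_neg (by rw [Int.even_iff]; simp at hn3; omega)]; simp
  · rw [if_pos (by rw [Int.even_iff]; simp at hn3; omega)]; simp

/-- the equivalence identifying points in the same piece (A, B or C) is a
time-abstract bisimulation for the flow `(x₁,x₂) + (τ,0)`: for any two points in the same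
piece and any delay `τ ≥ 0`, there is a delay `τ' ≥ 0` reaching the same piece. -/
theorem piece_partition_time_abstract_bisim
    (y₁ y₁' : ℝ) (y₂ y₂' : ℤ)
    (hy₁ : 0 ≤ y₁) (hy₁' : 0 ≤ y₁')
    (hy₂ : y₂ = 0 ∨ y₂ = 1) (hy₂' : y₂' = 0 ∨ y₂' = 1)
    (hsame : piece y₁ y₂ = piece y₁' y₂') :
    ∀ τ : ℝ, 0 ≤ τ → ∃ τ' : ℝ, 0 ≤ τ' ∧ piece (y₁ + τ) y₂ = piece (y₁' + τ') y₂' := by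
  intro τ hτ
  by_cases h0 : y₁ + τ < 1
  · have h1 : y₁ < 1 := by linarith
    have hp : piece y₁ y₂ = 0 := by unfold piece; rw [if_pos h1]
    have hp' : piece y₁' y₂' = 0 := hsame ▸ hp
    have h1' : y₁' < 1 := by
      by_contra h
      unfold piece at hp'
      rw [if_neg h] at hp'
      split at hp' <;> simp at hp'
    refine ⟨0, le_refl 0, ?_⟩
    unfold piece
    rw [if_pos h0, if_pos (by linarith)]
  · by_cases he : Even (⌊y₁ + τ⌋ + y₂)
    · obtain ⟨τ', hτ', h⟩ := reach y₁' y₂' true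
      refine ⟨τ', hτ', ?_⟩
      simp only [if_pos] at h
      rw [h]
      unfold piece
      rw [if_neg h0, if_pos he]
    · obtain ⟨τ', hτ', h⟩ := reach y₁' y₂' false
      refine ⟨τ', hτ', ?_⟩
      simp only [Bool.false_eq_true, if_false] at h
      rw [h]
      unfold piece
      rw [if_neg h0, if_neg he]
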